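/- The MDP of Example 5.1 with initial state 1 is absorbing but not uniformly absorbing: sup_π E_1^π[T₀] = 4 < ∞, yet for every n ≥ 0, sup_π E_1^π[Σ_{t=n}^∞ 𝟙{X_t ≠ 0}] ≥ 2. -/

import Mathlib

/-- Transition kernel of the MDP of Example 5.1 on state space `ℕ` with actions `{1,2}`:
`0` is absorbing; action `1`: `p(0|x,1) = 2^{-x}`, `p(x|x,1) = 1 - 2^{-x}`;
action `2`: `p(0|x,2) = 1/2`, `p(x+1|x,2) = 1/2`. -/
noncomputable def Pkernel (a x y : ℕ) : ℝ :=
  if x = 0 then (if y = 0 then 1 else 0)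
  else if a = 1 then
    (if y = 0 then (1/2 : ℝ)^x else if y = x then 1 - (1/2 : ℝ)^x else 0)
  else (if y = 0 then (1/2 : ℝ) else if y = x + 1 then (1/2 : ℝ) else 0)

/-- A history is a list of (action, resulting state) pairs, most recent first.
`curState x₀ h` is the current state after history `h` starting from `x₀`. -/
def curState (x₀ : ℕ) : List (ℕ × ℕ) → ℕ
  | [] => x₀
  | (_, y) :: _ => y

/-- A (randomized, history-dependent) strategy assigns to the initial state and a history
a probability distribution over actions; `σ x₀ h a` is the probability of action `a`. -/
def IsStrategy (σ : ℕ → List (ℕ × ℕ) → ℕ → ℝ) : Prop :=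
  ∀ x₀ h, (∀ a, 0 ≤ σ x₀ h a) ∧ σ x₀ h 1 + σ x₀ h 2 = 1
    ∧ ∀ a, a ≠ 1 → a ≠ 2 → σ x₀ h a = 0

/-- Probability that the controlled process under `σ` started at `x₀` realizes the
trajectory recorded by the history `h` (most recent pair first). -/
noncomputable def trajProb (σ : ℕ → List (ℕ × ℕ) → ℕ → ℝ) (x₀ : ℕ) :
    List (ℕ × ℕ) → ℝ
  | [] => 1
  | (a, y) :: h => trajProb σ x₀ h * σ x₀ h a * Pkernel a (curState x₀ h) y

/-- `Pne σ x₀ t`: probability that under strategy `σ` started at `x₀` the state at time `t`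
is nonzero, i.e. `P^σ_{x₀}(X_t ≠ 0) = P^σ_{x₀}(T₀ > t)`. -/
noncomputable def Pne (σ : ℕ → List (ℕ × ℕ) → ℕ → ℝ) (x₀ t : ℕ) : ℝ :=
  ∑' h : {h : List (ℕ × ℕ) // h.length = t ∧ curState x₀ h ≠ 0}, trajProb σ x₀ h.1

/-- Expected hitting time of `0`: `E^σ_{x₀}[T₀] = ∑_{t=0}^∞ P^σ_{x₀}(T₀ > t)`. -/
noncomputable def hittingE (σ : ℕ → List (ℕ × ℕ) → ℕ → ℝ) (x₀ : ℕ) : ℝ :=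
  ∑' t : ℕ, Pne σ x₀ t

open scoped ENNReal

lemma half_pow_le_one (x : ℕ) : ((1:ℝ)/2)^x ≤ 1 := pow_le_one₀ (by norm_num) (by norm_num)

lemma Pkernel_nonneg (a x y : ℕ) : 0 ≤ Pkernel a x y := by
  have := half_pow_le_one x
  have : (0:ℝ) ≤ 1 - (1/2)^x := by linarith
  unfold Pkernel
  split_ifs <;> first | positivity | linarith

lemma Pkernel_support {a x y : ℕ} (h : Pkernel a x y ≠ 0) : y = 0 ∨ y = x ∨ y = x + 1 := by
  unfold Pkernel at h
  split_ifs at h <;> tauto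

lemma trajProb_nonneg {σ : ℕ → List (ℕ × ℕ) → ℕ → ℝ} (hσ : IsStrategy σ) (x₀ : ℕ)
    (h : List (ℕ × ℕ)) : 0 ≤ trajProb σ x₀ h := by
  induction h with
  | nil => simp [trajProb]
  | cons p h ih =>
      obtain ⟨a, y⟩ := p
      simp only [trajProb]
      exact mul_nonneg (mul_nonneg ih ((hσ x₀ h).1 a)) (Pkernel_nonneg a _ y)

noncomputable def tp (σ : ℕ → List (ℕ × ℕ) → ℕ → ℝ) (x₀ : ℕ) (h : List (ℕ × ℕ)) : ℝ≥0∞ :=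
  ENNReal.ofReal (trajProb σ x₀ h)

lemma tp_nil (σ : ℕ → List (ℕ × ℕ) → ℕ → ℝ) (x₀ : ℕ) : tp σ x₀ [] = 1 := by
  simp [tp, trajProb]

lemma tp_cons {σ : ℕ → List (ℕ × ℕ) → ℕ → ℝ} (hσ : IsStrategy σ) (x₀ : ℕ)
    (a y : ℕ) (h : List (ℕ × ℕ)) :
    tp σ x₀ ((a, y) :: h) =
      tp σ x₀ h * ENNReal.ofReal (σ x₀ h a) * ENNReal.ofReal (Pkernel a (curState x₀ h) y) := by
  unfold tp
  simp only [trajProb]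
  rw [ENNReal.ofReal_mul (mul_nonneg (trajProb_nonneg hσ x₀ h) ((hσ x₀ h).1 a)),
    ENNReal.ofReal_mul (trajProb_nonneg hσ x₀ h)]

/-- superharmonic weight function -/
noncomputable def wf (x : ℕ) : ℝ≥0∞ := if x = 0 then 0 else 2^x + 2

lemma sigma_tsum_one {σ : ℕ → List (ℕ × ℕ) → ℕ → ℝ} (hσ : IsStrategy σ) (x₀ : ℕ)
    (h : List (ℕ × ℕ)) : ∑' a : ℕ, ENNReal.ofReal (σ x₀ h a) = 1 := by
  rw [tsum_eq_sum (s := {1, 2}) (by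
    intro a ha
    simp only [Finset.mem_insert, Finset.mem_singleton] at ha
    push_neg at ha
    rw [(hσ x₀ h).2.2 a ha.1 ha.2, ENNReal.ofReal_zero])]
  rw [Finset.sum_pair (by norm_num)]
  rw [← ENNReal.ofReal_add ((hσ x₀ h).1 1) ((hσ x₀ h).1 2), (hσ x₀ h).2.1, ENNReal.ofReal_one]

lemma Q_le (a x : ℕ) (hx : x ≠ 0) :
    ∑' y : ℕ, ENNReal.ofReal (Pkernel a x y) * wf y ≤ 2^x + 1 := by
  have h2 : ((2:ℝ≥0∞)^x + 1) = ENNReal.ofReal ((2:ℝ)^x + 1) := by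
    rw [ENNReal.ofReal_add (by positivity) (by norm_num), ENNReal.ofReal_pow (by norm_num),
      ENNReal.ofReal_one, ENNReal.ofReal_ofNat]
  by_cases ha : a = 1
  · subst ha
    rw [tsum_eq_single x (by
      intro y hy
      by_cases hy0 : y = 0
      · simp [hy0, wf]
      · have : Pkernel 1 x y = 0 := by
          unfold Pkernel; simp [hx, hy0, hy]
        simp [this])]
    have hwx : wf x = ENNReal.ofReal ((2:ℝ)^x + 2) := by
      rw [wf, if_neg hx, ENNReal.ofReal_add (by positivity) (by norm_num),
        ENNReal.ofReal_pow (by norm_num), ENNReal.ofReal_ofNat]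
    have hPx : Pkernel 1 x x = 1 - (1/2:ℝ)^x := by
      unfold Pkernel; simp [hx]
    rw [hPx, hwx, h2, ← ENNReal.ofReal_mul (by have := half_pow_le_one x; linarith)]
    apply ENNReal.ofReal_le_ofReal
    have hpow : ((1:ℝ)/2)^x * 2^x = 1 := by
      rw [← mul_pow]; norm_num
    have hp0 : (0:ℝ) ≤ (1/2)^x := by positivity
    nlinarith
  · rw [tsum_eq_single (x+1) (by
      intro y hy
      by_cases hy0 : y = 0
      · simp [hy0, wf]
      · have : Pkernel a x y = 0 := by
          unfold Pkernel; simp [hx, ha, hy0, hy]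
        simp [this])]
    have hwx : wf (x+1) = ENNReal.ofReal ((2:ℝ)^(x+1) + 2) := by
      rw [wf, if_neg (Nat.succ_ne_zero x), ENNReal.ofReal_add (by positivity) (by norm_num),
        ENNReal.ofReal_pow (by norm_num), ENNReal.ofReal_ofNat]
    have hPx : Pkernel a x (x+1) = (1/2:ℝ) := by
      unfold Pkernel; simp [hx, ha]
    rw [hPx, hwx, h2, ← ENNReal.ofReal_mul (by norm_num)]
    apply ENNReal.ofReal_le_ofReal
    rw [pow_succ]
    ring_nf
    nlinarith [pow_pos (by norm_num : (0:ℝ) < 2) x]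

lemma step_ineq {σ : ℕ → List (ℕ × ℕ) → ℕ → ℝ} (hσ : IsStrategy σ) (x₀ : ℕ)
    (h : List (ℕ × ℕ)) :
    (∑' p : ℕ × ℕ, ENNReal.ofReal (σ x₀ h p.1) * ENNReal.ofReal (Pkernel p.1 (curState x₀ h) p.2)
        * wf p.2) + (if curState x₀ h = 0 then 0 else 1) ≤ wf (curState x₀ h) := by
  set x := curState x₀ h with hx
  by_cases hx0 : x = 0
  · have hz : ∀ p : ℕ × ℕ, ENNReal.ofReal (σ x₀ h p.1) * ENNReal.ofReal (Pkernel p.1 x p.2)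
        * wf p.2 = 0 := by
      rintro ⟨a, y⟩
      by_cases hy : y = 0
      · simp [hy, wf]
      · have : Pkernel a x y = 0 := by unfold Pkernel; simp [hx0, hy]
        simp [this]
    rw [tsum_congr hz, tsum_zero]
    simp [hx0, wf]
  · rw [ENNReal.tsum_prod']
    have hinner : ∀ a : ℕ, (∑' y : ℕ, ENNReal.ofReal (σ x₀ h a) * ENNReal.ofReal (Pkernel a x y)
        * wf y) ≤ ENNReal.ofReal (σ x₀ h a) * (2^x + 1) := by
      intro a
      calc (∑' y : ℕ, ENNReal.ofReal (σ x₀ h a) * ENNReal.ofReal (Pkernel a x y) * wf y)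
          = ENNReal.ofReal (σ x₀ h a) * ∑' y : ℕ, ENNReal.ofReal (Pkernel a x y) * wf y := by
            rw [← ENNReal.tsum_mul_left]
            exact tsum_congr fun y => by ring
        _ ≤ ENNReal.ofReal (σ x₀ h a) * (2^x + 1) :=
            mul_le_mul_right (Q_le a x hx0) _
    calc (∑' a : ℕ, ∑' y : ℕ, ENNReal.ofReal (σ x₀ h a) * ENNReal.ofReal (Pkernel a x y) * wf y)
          + (if x = 0 then 0 else 1)
        ≤ (∑' a : ℕ, ENNReal.ofReal (σ x₀ h a) * (2^x + 1)) + 1 := by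
          gcongr with a
          · exact hinner a
          · simp [hx0]
      _ = (2^x + 1) + 1 := by
          rw [ENNReal.tsum_mul_right, sigma_tsum_one hσ, one_mul]
      _ ≤ wf x := by
          rw [wf, if_neg hx0]
          have : (2:ℝ≥0∞)^x + 1 + 1 = 2^x + 2 := by ring
          rw [this]

def consEquiv (t : ℕ) :
    ({h : List (ℕ × ℕ) // h.length = t} × (ℕ × ℕ)) ≃ {h : List (ℕ × ℕ) // h.length = t + 1} where
  toFun q := ⟨q.2 :: q.1.1, by simp [q.1.2]⟩
  invFun h := (⟨h.1.tail, by simp [h.2]⟩, h.1.headI)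
  left_inv := by rintro ⟨⟨l, hl⟩, p⟩; simp
  right_inv := by
    rintro ⟨l, hl⟩
    cases l with
    | nil => simp at hl
    | cons p l => simp

noncomputable def Wt (σ : ℕ → List (ℕ × ℕ) → ℕ → ℝ) (x₀ t : ℕ) : ℝ≥0∞ :=
  ∑' h : {h : List (ℕ × ℕ) // h.length = t}, tp σ x₀ h.1 * wf (curState x₀ h.1)

noncomputable def PneE (σ : ℕ → List (ℕ × ℕ) → ℕ → ℝ) (x₀ t : ℕ) : ℝ≥0∞ :=
  ∑' h : {h : List (ℕ × ℕ) // h.length = t},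
    tp σ x₀ h.1 * (if curState x₀ h.1 = 0 then 0 else 1)

lemma Wt_zero (σ : ℕ → List (ℕ × ℕ) → ℕ → ℝ) (x₀ : ℕ) : Wt σ x₀ 0 = wf x₀ := by
  unfold Wt
  rw [tsum_eq_single (⟨[], rfl⟩ : {h : List (ℕ × ℕ) // h.length = 0})]
  · rw [tp_nil]; simp [curState]
  · rintro ⟨l, hl⟩ hne
    exact absurd (Subtype.ext (List.length_eq_zero_iff.mp hl)) hne

lemma Wt_step {σ : ℕ → List (ℕ × ℕ) → ℕ → ℝ} (hσ : IsStrategy σ) (x₀ t : ℕ) :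
    Wt σ x₀ (t + 1) + PneE σ x₀ t ≤ Wt σ x₀ t := by
  have h1 : Wt σ x₀ (t + 1) = ∑' h : {h : List (ℕ × ℕ) // h.length = t},
      tp σ x₀ h.1 * ∑' p : ℕ × ℕ, ENNReal.ofReal (σ x₀ h.1 p.1)
        * ENNReal.ofReal (Pkernel p.1 (curState x₀ h.1) p.2) * wf p.2 := by
    unfold Wt
    rw [← (consEquiv t).tsum_eq (fun h => tp σ x₀ h.1 * wf (curState x₀ h.1))]
    rw [ENNReal.tsum_prod']
    refine tsum_congr fun h => ?_
    rw [← ENNReal.tsum_mul_left]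
    refine tsum_congr fun p => ?_
    obtain ⟨a, y⟩ := p
    have : curState x₀ ((a, y) :: h.1) = y := rfl
    rw [show ((consEquiv t) (h, (a, y))).1 = (a, y) :: h.1 from rfl, this,
      tp_cons hσ]
    ring
  rw [h1, PneE, ← ENNReal.tsum_add]
  refine Summable.tsum_le_tsum (fun h => ?_) ENNReal.summable ENNReal.summable
  rw [← mul_add]
  exact mul_le_mul_right (step_ineq hσ x₀ h.1) _

lemma tsum_PneE_le {σ : ℕ → List (ℕ × ℕ) → ℕ → ℝ} (hσ : IsStrategy σ) (x₀ : ℕ) :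
    ∑' t : ℕ, PneE σ x₀ t ≤ wf x₀ := by
  have key : ∀ T : ℕ, (∑ t ∈ Finset.range T, PneE σ x₀ t) + Wt σ x₀ T ≤ wf x₀ := by
    intro T
    induction T with
    | zero => simp [Wt_zero]
    | succ T ih =>
        rw [Finset.sum_range_succ]
        calc (∑ t ∈ Finset.range T, PneE σ x₀ t) + PneE σ x₀ T + Wt σ x₀ (T + 1)
            = (∑ t ∈ Finset.range T, PneE σ x₀ t) + (Wt σ x₀ (T + 1) + PneE σ x₀ T) := by ring
          _ ≤ (∑ t ∈ Finset.range T, PneE σ x₀ t) + Wt σ x₀ T :=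
              add_le_add_right (Wt_step hσ x₀ T) _
          _ ≤ wf x₀ := ih
  rw [ENNReal.tsum_eq_iSup_nat]
  exact iSup_le fun T => le_trans (le_add_right le_rfl) (key T)

lemma PneE_eq (σ : ℕ → List (ℕ × ℕ) → ℕ → ℝ) (x₀ t : ℕ) :
    PneE σ x₀ t
      = ∑' h : {h : List (ℕ × ℕ) // h.length = t ∧ curState x₀ h ≠ 0}, tp σ x₀ h.1 := by
  have h1 : PneE σ x₀ t = ∑' h : List (ℕ × ℕ),
      Set.indicator {h : List (ℕ × ℕ) | h.length = t}
        (fun h => tp σ x₀ h * (if curState x₀ h = 0 then 0 else 1)) h := by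
    rw [PneE]
    exact tsum_subtype {h : List (ℕ × ℕ) | h.length = t}
      (fun h => tp σ x₀ h * (if curState x₀ h = 0 then 0 else 1))
  have h2 : (∑' h : {h : List (ℕ × ℕ) // h.length = t ∧ curState x₀ h ≠ 0}, tp σ x₀ h.1)
      = ∑' h : List (ℕ × ℕ),
        Set.indicator {h : List (ℕ × ℕ) | h.length = t ∧ curState x₀ h ≠ 0} (tp σ x₀) h :=
    tsum_subtype _ _
  rw [h1, h2]
  refine tsum_congr fun h => ?_
  by_cases hl : h.length = t
  · by_cases hc : curState x₀ h = 0
    · rw [Set.indicator_of_mem (by exact hl), Set.indicator_of_notMem (by simp [hc])]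
      simp [hc]
    · rw [Set.indicator_of_mem (by exact hl), Set.indicator_of_mem (by exact ⟨hl, hc⟩)]
      simp [hc]
  · rw [Set.indicator_of_notMem (by exact hl), Set.indicator_of_notMem (by
      simp only [Set.mem_setOf_eq]; tauto)]

lemma Pne_eq_toReal {σ : ℕ → List (ℕ × ℕ) → ℕ → ℝ} (hσ : IsStrategy σ) (x₀ t : ℕ) :
    Pne σ x₀ t = (PneE σ x₀ t).toReal := by
  rw [PneE_eq,
    ENNReal.tsum_toReal_eq (f := fun h : {h : List (ℕ × ℕ) // h.length = t ∧ curState x₀ h ≠ 0} =>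
      tp σ x₀ h.1) (fun _ => ENNReal.ofReal_ne_top)]
  refine tsum_congr fun h => ?_
  rw [tp, ENNReal.toReal_ofReal (trajProb_nonneg hσ x₀ h.1)]

lemma PneE_ne_top {σ : ℕ → List (ℕ × ℕ) → ℕ → ℝ} (hσ : IsStrategy σ) (t : ℕ) :
    PneE σ 1 t ≠ ⊤ := by
  refine ne_top_of_le_ne_top ?_ (le_trans (ENNReal.le_tsum t) (tsum_PneE_le hσ 1))
  simp [wf]

lemma wf_one : wf 1 = 4 := by norm_num [wf]

lemma hittingE_le_four {σ : ℕ → List (ℕ × ℕ) → ℕ → ℝ} (hσ : IsStrategy σ) :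
    hittingE σ 1 ≤ 4 := by
  have h1 : hittingE σ 1 = (∑' t : ℕ, PneE σ 1 t).toReal := by
    rw [hittingE, ENNReal.tsum_toReal_eq (fun t => PneE_ne_top hσ t)]
    exact tsum_congr fun t => Pne_eq_toReal hσ 1 t
  rw [h1]
  refine ENNReal.toReal_le_of_le_ofReal (by norm_num) ?_
  calc ∑' t : ℕ, PneE σ 1 t ≤ wf 1 := tsum_PneE_le hσ 1
    _ = ENNReal.ofReal 4 := by rw [wf_one]; norm_num [ENNReal.ofReal_ofNat]

lemma tail_le_four {σ : ℕ → List (ℕ × ℕ) → ℕ → ℝ} (hσ : IsStrategy σ) (n : ℕ) :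
    ∑' t : ℕ, Pne σ 1 (n + t) ≤ 4 := by
  have h1 : (∑' t : ℕ, Pne σ 1 (n + t)) = (∑' t : ℕ, PneE σ 1 (n + t)).toReal := by
    rw [ENNReal.tsum_toReal_eq (fun t => PneE_ne_top hσ (n + t))]
    exact tsum_congr fun t => Pne_eq_toReal hσ 1 (n + t)
  rw [h1]
  refine ENNReal.toReal_le_of_le_ofReal (by norm_num) ?_
  calc ∑' t : ℕ, PneE σ 1 (n + t)
      ≤ ∑' t : ℕ, PneE σ 1 t :=
        ENNReal.tsum_comp_le_tsum_of_injective (add_right_injective n) (PneE σ 1)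
    _ ≤ wf 1 := tsum_PneE_le hσ 1
    _ = ENNReal.ofReal 4 := by rw [wf_one]; norm_num [ENNReal.ofReal_ofNat]

/-! ### Deterministic strategies: action 2 for the first `n` steps, then action 1 -/

def sigdet (n : ℕ) : ℕ → List (ℕ × ℕ) → ℕ → ℝ := fun _ h a =>
  if h.length < n then (if a = 2 then 1 else 0) else (if a = 1 then 1 else 0)

lemma sigdet_strategy (n : ℕ) : IsStrategy (sigdet n) := by
  intro x₀ h
  refine ⟨fun a => ?_, ?_, fun a h1 h2 => ?_⟩ <;>
    by_cases hl : h.length < n <;> simp [sigdet, hl] <;> first | split_ifs <;> norm_num | omega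

def hcan (n : ℕ) : ℕ → List (ℕ × ℕ)
  | 0 => []
  | t+1 => ((if t < n then 2 else 1), min (t+1) n + 1) :: hcan n t

lemma hcan_length (n t : ℕ) : (hcan n t).length = t := by
  induction t with
  | zero => rfl
  | succ t ih => simp [hcan, ih]

lemma hcan_cur (n t : ℕ) : curState 1 (hcan n t) = min t n + 1 := by
  cases t with
  | zero => show 1 = min 0 n + 1; omega
  | succ t => rfl

noncomputable def Vfun (n t : ℕ) : ℝ := (1/2 : ℝ)^(min t n) * (1 - (1/2 : ℝ)^(n+1))^(t - n)

lemma trajProb_hcan (n t : ℕ) : trajProb (sigdet n) 1 (hcan n t) = Vfun n t := by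
  induction t with
  | zero => simp [hcan, trajProb, Vfun]
  | succ t ih =>
      rw [show hcan n (t+1) = ((if t < n then 2 else 1), min (t+1) n + 1) :: hcan n t from rfl]
      rw [trajProb, ih, hcan_cur]
      by_cases htn : t < n
      · have h1 : sigdet n 1 (hcan n t) (if t < n then 2 else 1) = 1 := by
          simp [sigdet, hcan_length, htn]
        have hmin : min t n = t := by omega
        have hmin1 : min (t+1) n = t + 1 := by omega
        have h2 : Pkernel (if t < n then 2 else 1) (min t n + 1) (min (t+1) n + 1) = 1/2 := by
          rw [if_pos htn, hmin, hmin1]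
          unfold Pkernel
          norm_num
        rw [h1, h2, Vfun, Vfun, hmin, hmin1]
        have : t + 1 - n = 0 := by omega
        have ht0 : t - n = 0 := by omega
        rw [this, ht0]
        ring
      · have h1 : sigdet n 1 (hcan n t) (if t < n then 2 else 1) = 1 := by
          simp [sigdet, hcan_length, htn]
        have hmin : min t n = n := by omega
        have hmin1 : min (t+1) n = n := by omega
        have h2 : Pkernel (if t < n then 2 else 1) (min t n + 1) (min (t+1) n + 1)
            = 1 - (1/2 : ℝ)^(n+1) := by
          rw [if_neg htn, hmin, hmin1]
          unfold Pkernel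
          norm_num
        rw [h1, h2, Vfun, Vfun, hmin, hmin1]
        have : t + 1 - n = (t - n) + 1 := by omega
        rw [this, pow_succ]
        ring

lemma traj_unique (n : ℕ) : ∀ (t : ℕ) (h : List (ℕ × ℕ)), h.length = t →
    curState 1 h ≠ 0 → trajProb (sigdet n) 1 h ≠ 0 → h = hcan n t := by
  intro t
  induction t with
  | zero => intro h hl _ _; rw [List.length_eq_zero_iff] at hl; rw [hl]; rfl
  | succ t ih =>
      rintro (_ | ⟨⟨a, y⟩, h'⟩) hl hc hne
      · simp at hl
      · simp only [List.length_cons, Nat.succ.injEq] at hl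
        rw [trajProb] at hne
        have h1 : trajProb (sigdet n) 1 h' ≠ 0 := fun hz => hne (by rw [hz]; ring)
        have h2 : sigdet n 1 h' a ≠ 0 := fun hz => hne (by rw [hz]; ring)
        have h3 : Pkernel a (curState 1 h') y ≠ 0 := fun hz => hne (by rw [hz]; ring)
        have hy : y ≠ 0 := hc
        have hc' : curState 1 h' ≠ 0 := by
          intro hz
          rw [hz] at h3
          apply h3
          unfold Pkernel
          simp [hy]
        have hh' : h' = hcan n t := ih h' hl hc' h1
        subst hh'
        have hcur : curState 1 (hcan n t) = min t n + 1 := hcan_cur n t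
        by_cases htn : t < n
        · have ha : a = 2 := by
            by_contra ha2
            apply h2
            simp [sigdet, hcan_length, htn, ha2]
          have hmin : min t n = t := by omega
          have hy2 : y = t + 1 + 1 := by
            by_contra hy2
            apply h3
            rw [hcur, hmin, ha]
            simp [Pkernel, hy, hy2]
          rw [show hcan n (t+1) = ((if t < n then 2 else 1), min (t+1) n + 1) :: hcan n t
            from rfl, if_pos htn]
          have : min (t+1) n + 1 = t + 1 + 1 := by omega
          rw [this, ha, hy2]
        · have ha : a = 1 := by
            by_contra ha1
            apply h2
            simp [sigdet, hcan_length, htn, ha1]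
          have hmin : min t n = n := by omega
          have hy2 : y = n + 1 := by
            by_contra hy2
            apply h3
            rw [hcur, hmin, ha]
            simp [Pkernel, hy, hy2]
          rw [show hcan n (t+1) = ((if t < n then 2 else 1), min (t+1) n + 1) :: hcan n t
            from rfl, if_neg htn]
          have : min (t+1) n + 1 = n + 1 := by omega
          rw [this, ha, hy2]

lemma Pne_sigdet (n t : ℕ) : Pne (sigdet n) 1 t = Vfun n t := by
  rw [Pne, tsum_eq_single (⟨hcan n t, hcan_length n t, by rw [hcan_cur]; omega⟩ :
    {h : List (ℕ × ℕ) // h.length = t ∧ curState 1 h ≠ 0})]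
  · exact trajProb_hcan n t
  · rintro ⟨h, hl, hc⟩ hne
    by_contra hz
    exact hne (Subtype.ext (traj_unique n t h hl hc hz))

lemma q_nonneg (n : ℕ) : (0:ℝ) ≤ 1 - (1/2 : ℝ)^(n+1) := by
  have := half_pow_le_one (n+1); linarith

lemma q_lt_one (n : ℕ) : (1 - (1/2 : ℝ)^(n+1)) < 1 := by
  have : (0:ℝ) < (1/2)^(n+1) := by positivity
  linarith

lemma Vfun_shift (n t : ℕ) : Vfun n (t + n) = (1/2 : ℝ)^n * (1 - (1/2 : ℝ)^(n+1))^t := by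
  rw [Vfun]
  congr 1
  · congr 1; omega
  · congr 1; omega

lemma summable_V (n : ℕ) : Summable (Vfun n) := by
  rw [← summable_nat_add_iff n]
  have : (fun t => Vfun n (t + n)) = fun t => (1/2 : ℝ)^n * (1 - (1/2 : ℝ)^(n+1))^t := by
    funext t; exact Vfun_shift n t
  rw [this]
  exact (summable_geometric_of_lt_one (q_nonneg n) (q_lt_one n)).mul_left _

lemma tsum_V_tail (n : ℕ) : ∑' t : ℕ, Vfun n (t + n) = 2 := by
  have h1 : (fun t => Vfun n (t + n)) = fun t => (1/2 : ℝ)^n * (1 - (1/2 : ℝ)^(n+1))^t := by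
    funext t; exact Vfun_shift n t
  rw [h1, tsum_mul_left, tsum_geometric_of_lt_one (q_nonneg n) (q_lt_one n)]
  have h2 : (1:ℝ) - (1 - (1/2)^(n+1)) = (1/2)^(n+1) := by ring
  rw [h2, pow_succ, mul_inv, ← mul_assoc,
    mul_inv_cancel₀ (pow_ne_zero _ (by norm_num : (1/2:ℝ) ≠ 0))]
  norm_num

lemma hittingE_sigdet (n : ℕ) : hittingE (sigdet n) 1 = 4 - 2 * (1/2 : ℝ)^n := by
  rw [hittingE]
  have h0 : (fun t => Pne (sigdet n) 1 t) = Vfun n := by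
    funext t; exact Pne_sigdet n t
  rw [h0, ← Summable.sum_add_tsum_nat_add n (summable_V n), tsum_V_tail]
  have h1 : ∀ i ∈ Finset.range n, Vfun n i = (1/2 : ℝ)^i := by
    intro i hi
    rw [Finset.mem_range] at hi
    rw [Vfun, show min i n = i by omega, show i - n = 0 by omega, pow_zero, mul_one]
  rw [Finset.sum_congr rfl h1, geom_sum_eq (by norm_num : (1/2:ℝ) ≠ 1)]
  ring

lemma tail_sigdet (n : ℕ) : ∑' t : ℕ, Pne (sigdet n) 1 (n + t) = 2 := by
  have h0 : (fun t => Pne (sigdet n) 1 (n + t)) = fun t => Vfun n (t + n) := by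
    funext t
    rw [Pne_sigdet, add_comm]
  rw [h0, tsum_V_tail]

/-- The MDP of Example 5.1 with initial state `1` is absorbing but not uniformly absorbing:
`sup_π E_1^π[T₀] = 4 < ∞`, yet for every `n ≥ 0`,
`sup_π E_1^π[∑_{t=n}^∞ 𝟙{X_t ≠ 0}] ≥ 2`. -/
theorem absorbing_not_uniformly_absorbing :
    (⨆ σ : {σ : ℕ → List (ℕ × ℕ) → ℕ → ℝ // IsStrategy σ}, hittingE σ.1 1) = 4
      ∧ ∀ n : ℕ,
          2 ≤ ⨆ σ : {σ : ℕ → List (ℕ × ℕ) → ℕ → ℝ // IsStrategy σ},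
                ∑' t : ℕ, Pne σ.1 1 (n + t) := by
  constructor
  · have hbdd : BddAbove (Set.range fun σ : {σ : ℕ → List (ℕ × ℕ) → ℕ → ℝ // IsStrategy σ} =>
        hittingE σ.1 1) := by
      refine ⟨4, ?_⟩
      rintro _ ⟨σ, rfl⟩
      exact hittingE_le_four σ.2
    have hne : Nonempty {σ : ℕ → List (ℕ × ℕ) → ℕ → ℝ // IsStrategy σ} :=
      ⟨⟨sigdet 0, sigdet_strategy 0⟩⟩
    refine le_antisymm (ciSup_le fun σ => hittingE_le_four σ.2) ?_
    have htend : Filter.Tendsto (fun n : ℕ => 4 - 2 * (1/2 : ℝ)^n) Filter.atTop (nhds 4) := by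
      have := (tendsto_pow_atTop_nhds_zero_of_lt_one
        (by norm_num : (0:ℝ) ≤ 1/2) (by norm_num : (1/2:ℝ) < 1)).const_mul (2:ℝ)
      have h2 := Filter.Tendsto.const_sub (4:ℝ) this
      simpa using h2
    refine le_of_tendsto htend (Filter.Eventually.of_forall fun n => ?_)
    rw [← hittingE_sigdet n]
    exact le_ciSup hbdd ⟨sigdet n, sigdet_strategy n⟩
  · intro n
    have hbdd : BddAbove (Set.range fun σ : {σ : ℕ → List (ℕ × ℕ) → ℕ → ℝ // IsStrategy σ} =>
        ∑' t : ℕ, Pne σ.1 1 (n + t)) := by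
      refine ⟨4, ?_⟩
      rintro _ ⟨σ, rfl⟩
      exact tail_le_four σ.2 n
    rw [← tail_sigdet n]
    exact le_ciSup hbdd ⟨sigdet n, sigdet_strategy n⟩
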